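/- Roman's Identity: for all distinct integers n and k, ⌊n choose k⌉·⌊k choose n⌉ = (-1)^(n+k+1)/|n-k| (sign checked against the definitions, e.g. n = 1, k = 0 gives ⌊1 choose 0⌉·⌊0 choose 1⌉ = 1 = (-1)^2/1). -/

import Mathlib

/-- Roman factorial of an integer, as a rational number. -/
def romanFactorial (n : ℤ) : ℚ :=
  if 0 ≤ n then (n.toNat.factorial : ℚ)
  else (-1 : ℚ) ^ (n + 1) / ((-n - 1).toNat.factorial : ℚ)

/-- Roman coefficient of two integers. -/
def romanCoeff (n k : ℤ) : ℚ :=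
  romanFactorial n / (romanFactorial k * romanFactorial (n - k))

lemma romanFactorial_ne_zero (n : ℤ) : romanFactorial n ≠ 0 := by
  unfold romanFactorial
  split
  · exact_mod_cast Nat.factorial_ne_zero _
  · exact div_ne_zero (zpow_ne_zero _ (by norm_num))
      (by exact_mod_cast Nat.factorial_ne_zero _)

lemma neg_one_zpow_two_mul (z : ℤ) : (-1 : ℚ) ^ (2 * z) = 1 := by
  rw [zpow_mul]; norm_num

lemma neg_one_zpow_add_two_mul (a c : ℤ) : (-1 : ℚ) ^ (a + 2 * c) = (-1 : ℚ) ^ a := by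
  rw [zpow_add₀ (by norm_num : (-1:ℚ) ≠ 0), neg_one_zpow_two_mul, mul_one]

lemma romanFactorial_mul_neg (m : ℤ) (hm : 0 < m) :
    romanFactorial m * romanFactorial (-m) = (-1 : ℚ) ^ (m + 1) * m := by
  unfold romanFactorial
  rw [if_pos hm.le, if_neg (by omega)]
  have h1 : (-(-m) - 1) = m - 1 := by ring
  have h2 : m.toNat = (m - 1).toNat + 1 := by omega
  rw [h1, h2, Nat.factorial_succ]
  have h3 : (-m + 1) = (m + 1) + 2 * (-m) := by ring
  rw [h3, neg_one_zpow_add_two_mul]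
  have h4 : ((m - 1).toNat.factorial : ℚ) ≠ 0 := by
    exact_mod_cast Nat.factorial_ne_zero _
  have h6 : ((m - 1).toNat : ℚ) = (m : ℚ) - 1 := by
    exact_mod_cast Int.toNat_of_nonneg (show (0:ℤ) ≤ m - 1 by omega)
  rw [Nat.cast_mul, Nat.cast_add, Nat.cast_one, h6]
  field_simp
  ring

lemma one_div_romanFactorial_mul (m : ℤ) (hm : 0 < m) :
    (1 : ℚ) / (romanFactorial m * romanFactorial (-m)) = (-1 : ℚ) ^ (m + 1) / m := by
  rw [romanFactorial_mul_neg m hm]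
  have hmq : (m : ℚ) ≠ 0 := by exact_mod_cast hm.ne'
  have hsq : (-1 : ℚ) ^ (m + 1) * (-1 : ℚ) ^ (m + 1) = 1 := by
    rw [← zpow_add₀ (by norm_num : (-1:ℚ) ≠ 0)]
    have : (m + 1) + (m + 1) = 2 * (m + 1) := by ring
    rw [this, neg_one_zpow_two_mul]
  field_simp
  linear_combination (-1 : ℚ) * hsq

/-- Roman's identity: for distinct integers `n` and `k`,
`⌊n choose k⌉ ⌊k choose n⌉ = (-1)^(n+k+1) / |n-k|`. -/
theorem romanCoeff_roman_identity (n k : ℤ) (h : n ≠ k) :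
    romanCoeff n k * romanCoeff k n = (-1 : ℚ) ^ (n + k + 1) / (|n - k| : ℚ) := by
  have hprod : romanCoeff n k * romanCoeff k n
      = 1 / (romanFactorial (n - k) * romanFactorial (k - n)) := by
    unfold romanCoeff
    have h1 := romanFactorial_ne_zero n
    have h2 := romanFactorial_ne_zero k
    have h3 := romanFactorial_ne_zero (n - k)
    have h4 := romanFactorial_ne_zero (k - n)
    field_simp
  rw [hprod]
  rcases lt_or_gt_of_ne h with hlt | hgt
  · -- n < k
    have hm : 0 < k - n := by omega
    have : (n - k) = -(k - n) := by ring
    rw [this, mul_comm, one_div_romanFactorial_mul (k - n) hm]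
    have hcast : ((n:ℚ) - k) = ((n - k : ℤ) : ℚ) := by push_cast; ring
    rw [hcast, ← Int.cast_abs, show |n - k| = k - n from by rw [abs_sub_comm]; exact abs_of_pos hm]
    have hexp : (n + k + 1) = (k - n + 1) + 2 * n := by ring
    rw [hexp, neg_one_zpow_add_two_mul]
  · -- k < n
    have hm : 0 < n - k := by omega
    have : (k - n) = -(n - k) := by ring
    rw [this, one_div_romanFactorial_mul (n - k) hm]
    have hcast : ((n:ℚ) - k) = ((n - k : ℤ) : ℚ) := by push_cast; ring
    rw [hcast, ← Int.cast_abs, show |n - k| = n - k from abs_of_pos hm]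
    have hexp : (n + k + 1) = (n - k + 1) + 2 * k := by ring
    rw [hexp, neg_one_zpow_add_two_mul]
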